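/- Let $R \to A$ be a finite ring homomorphism of commutative Noetherian local rings with $A$ generated as an $R$-module by $1, g_1, \ldots, g_r$. Suppose $0 \to R^{r+1} \xrightarrow{\Lambda} R^{r+1} \xrightarrow{G} A \to 0$ is a free resolution with $\Lambda$ symmetric, $G = (1, g_1, \ldots, g_r)$, and the determinant of the submatrix $\Lambda^1_1$ (obtained by deleting the first row and column) maps to a nonzerodivisor of $A$. Then there is an exact sequence of $A$-modules $0 \to A^{r} \xrightarrow{\Lambda^1_1 \otimes A} A^{r} \to \ker(\mu) \to 0$, where $\mu: A \otimes_R A \to A$ is the multiplication map; i.e., $\Lambda^1_1$ base-changed to $A$ is a presentation matrix of $\ker(\mu)$ with respect to the generators $g_i \otimes 1 - 1 \otimes g_i$. -/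

import Mathlib

open Matrix TensorProduct

set_option maxHeartbeats 1000000
set_option synthInstance.maxHeartbeats 400000

/-- Proposition 4.1 (ring-theoretic form).  Let `R → A` be a finite homomorphism of
Noetherian local rings, with `A` generated as an `R`-module by `1, g_1, …, g_r`, and
let `0 → R^{r+1} →Λ R^{r+1} →G A → 0` be a free resolution with `Λ` symmetric and
`G = (1, g_1, …, g_r)`.  If the determinant of `Λ¹₁` (delete first row and column)
maps to a nonzerodivisor of `A`, then `Λ¹₁` base-changed to `A` is a presentation
matrix of `ker(μ)` (`μ : A ⊗[R] A → A` the multiplication) with respect to the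
generators `g_i ⊗ 1 - 1 ⊗ g_i`: the sequence `0 → A^r →Λ¹₁ A^r → ker(μ) → 0` is
exact. -/
theorem presentation_of_ker_mul
    (R A : Type*) [CommRing R] [CommRing A] [Algebra R A]
    [IsNoetherianRing R] [IsNoetherianRing A] [IsLocalRing R] [IsLocalRing A]
    [Module.Finite R A] (r : ℕ) (g : Fin r → A)
    (Λ : Matrix (Fin (r + 1)) (Fin (r + 1)) R) (hΛ : Λ.IsSymm)
    (hπsurj : Function.Surjective
      (Fintype.linearCombination R (Fin.cons (1 : A) g)))
    (hπker : LinearMap.ker (Fintype.linearCombination R (Fin.cons (1 : A) g)) =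
      LinearMap.range Λ.mulVecLin)
    (hΛinj : Function.Injective Λ.mulVecLin)
    (hdet : algebraMap R A (Λ.submatrix Fin.succ Fin.succ).det ∈ nonZeroDivisors A) :
    Function.Injective ((Λ.submatrix Fin.succ Fin.succ).map (algebraMap R A)).mulVecLin ∧
      LinearMap.ker (Fintype.linearCombination A
          (fun i : Fin r => (g i ⊗ₜ[R] 1 - 1 ⊗ₜ[R] g i : A ⊗[R] A))) =
        LinearMap.range ((Λ.submatrix Fin.succ Fin.succ).map (algebraMap R A)).mulVecLin ∧
      LinearMap.range (Fintype.linearCombination A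
          (fun i : Fin r => (g i ⊗ₜ[R] 1 - 1 ⊗ₜ[R] g i : A ⊗[R] A))) =
        (RingHom.ker (Algebra.TensorProduct.lmul' R (S := A)).toRingHom).restrictScalars A := by
  classical
  -- Notation
  set G : Fin (r + 1) → A := Fin.cons (1 : A) g with hG
  set π : (Fin (r + 1) → R) →ₗ[R] A := Fintype.linearCombination R G with hπdef
  set ΛA : Matrix (Fin (r + 1)) (Fin (r + 1)) A := Λ.map (algebraMap R A) with hΛA
  set Nm : Matrix (Fin r) (Fin r) A := (Λ.submatrix Fin.succ Fin.succ).map (algebraMap R A)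
    with hNm
  set δ : Fin r → A ⊗[R] A := fun i => (g i ⊗ₜ[R] 1 - 1 ⊗ₜ[R] g i : A ⊗[R] A) with hδ
  set T : (Fin r → A) →ₗ[A] A ⊗[R] A := Fintype.linearCombination A δ with hTdef
  have hsymm : ∀ i j, Λ i j = Λ j i := fun i j => (Matrix.IsSymm.apply hΛ i j).symm
  have hNmsymm : ∀ i j, Nm i j = Nm j i := by
    intro i j; simp only [hNm, Matrix.map_apply, Matrix.submatrix_apply]
    rw [hsymm]
  -- The column relation coming from `G ∘ Λ = 0`.
  have hcol : ∀ k, algebraMap R A (Λ 0 k)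
      = - ∑ i, g i * algebraMap R A (Λ (Fin.succ i) k) := by
    intro k
    have hmem : (fun i => Λ i k) ∈ LinearMap.range Λ.mulVecLin := by
      refine ⟨Pi.single k 1, ?_⟩
      funext i
      simp [Matrix.mulVecLin_apply, Matrix.mulVec_single]
    rw [← hπker] at hmem
    have h0 : π (fun i => Λ i k) = 0 := hmem
    rw [hπdef, Fintype.linearCombination_apply, Fin.sum_univ_succ] at h0
    simp only [hG, Fin.cons_zero, Fin.cons_succ, Algebra.smul_def, mul_one] at h0
    rw [eq_comm, neg_eq_iff_add_eq_zero, add_comm]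
    rw [← h0]
    congr 1
    exact Finset.sum_congr rfl fun i _ => (mul_comm _ _)
  -- Part 1 : injectivity
  have hdet' : Nm.det ∈ nonZeroDivisors A := by
    have hh : algebraMap R A (Λ.submatrix Fin.succ Fin.succ).det = Nm.det :=
      RingHom.map_det (algebraMap R A) (Λ.submatrix Fin.succ Fin.succ)
    rw [← hh]; exact hdet
  have hinj : Function.Injective Nm.mulVecLin := by
    rw [← LinearMap.ker_eq_bot, LinearMap.ker_eq_bot']
    intro x hx
    have h2 : Nm.det • x = 0 := by
      have := congrArg (fun y => Nm.adjugate *ᵥ y) hx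
      simpa [Matrix.mulVec_mulVec, Matrix.adjugate_mul, Matrix.smul_mulVec] using this
    funext i
    have h3 := congrFun h2 i
    simp only [Pi.smul_apply, smul_eq_mul, Pi.zero_apply] at h3
    exact (mem_nonZeroDivisors_iff.mp hdet').2 (x i) (by rw [mul_comm]; exact h3)
  -- The tensored surjection `P : A^{r+1} → A ⊗ A`.
  set P : (Fin (r + 1) → A) →ₗ[A] A ⊗[R] A :=
    Fintype.linearCombination A (fun j => (1 : A) ⊗ₜ[R] G j) with hPdef
  have hPapp : ∀ v : Fin (r + 1) → A, P v = ∑ j, v j ⊗ₜ[R] G j := by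
    intro v
    rw [hPdef, Fintype.linearCombination_apply]
    refine Finset.sum_congr rfl fun j _ => ?_
    rw [smul_tmul', smul_eq_mul, mul_one]
  have hPsurj : Function.Surjective P := by
    intro x
    induction x using TensorProduct.induction_on with
    | zero => exact ⟨0, map_zero P⟩
    | tmul a b =>
      obtain ⟨u, hu⟩ := hπsurj b
      refine ⟨fun j => a * algebraMap R A (u j), ?_⟩
      rw [hPapp]
      calc ∑ j, (a * algebraMap R A (u j)) ⊗ₜ[R] G j
          = ∑ j, a ⊗ₜ[R] (u j • G j) := by
            refine Finset.sum_congr rfl fun j _ => ?_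
            rw [mul_comm, ← Algebra.smul_def]
            exact smul_tmul _ _ _
        _ = a ⊗ₜ[R] (∑ j, u j • G j) := by rw [TensorProduct.tmul_sum]
        _ = a ⊗ₜ[R] π u := by rw [hπdef, Fintype.linearCombination_apply]
        _ = a ⊗ₜ[R] b := by rw [hu]
    | add x y hx hy =>
      obtain ⟨u, hu⟩ := hx
      obtain ⟨v, hv⟩ := hy
      exact ⟨u + v, by rw [map_add, hu, hv]⟩
  -- Exactness of `A^{r+1} → A^{r+1} → A ⊗ A`.
  have hπexact : Function.Exact Λ.mulVecLin π := LinearMap.exact_iff.mpr hπker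
  have hE := lTensor_exact A hπexact hπsurj
  set e : A ⊗[R] (Fin (r + 1) → R) ≃ₗ[A] (Fin (r + 1) → A) :=
    TensorProduct.piScalarRight R A A (Fin (r + 1)) with hedef
  have hPe : ∀ x : A ⊗[R] (Fin (r + 1) → R), P (e x) = LinearMap.lTensor A π x := by
    intro x
    induction x using TensorProduct.induction_on with
    | zero => simp
    | tmul a v =>
      rw [LinearMap.lTensor_tmul]
      have he : e (a ⊗ₜ v) = fun j => v j • a := by simp [hedef]
      rw [he, hPapp]
      calc ∑ j, (v j • a) ⊗ₜ[R] G j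
          = ∑ j, a ⊗ₜ[R] (v j • G j) := by
            refine Finset.sum_congr rfl fun j _ => ?_
            rw [smul_tmul]
        _ = a ⊗ₜ[R] (∑ j, v j • G j) := by rw [TensorProduct.tmul_sum]
        _ = a ⊗ₜ[R] π v := by rw [hπdef, Fintype.linearCombination_apply]
    | add x y hx hy => rw [map_add, map_add, map_add, hx, hy]
  have hFe : ∀ x : A ⊗[R] (Fin (r + 1) → R),
      ΛA.mulVecLin (e x) = e (LinearMap.lTensor A Λ.mulVecLin x) := by
    intro x
    induction x using TensorProduct.induction_on with
    | zero => simp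
    | tmul a v =>
      rw [LinearMap.lTensor_tmul]
      have he : e (a ⊗ₜ v) = fun j => v j • a := by simp [hedef]
      have he2 : e (a ⊗ₜ (Λ.mulVecLin v)) = fun j => (Λ.mulVecLin v) j • a := by
        simp [hedef]
      rw [he, he2]
      funext i
      simp only [Matrix.mulVecLin_apply, Matrix.mulVec, dotProduct, hΛA,
        Matrix.map_apply, Finset.sum_smul]
      refine Finset.sum_congr rfl fun j _ => ?_
      simp only [mul_smul, Algebra.smul_def, _root_.map_mul, mul_assoc]
    | add x y hx hy => simp only [map_add, hx, hy]
  have hexact : Function.Exact ΛA.mulVecLin P := by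
    intro y
    obtain ⟨x, rfl⟩ := e.surjective y
    rw [hPe x]
    constructor
    · intro h
      obtain ⟨z, hz⟩ := (hE x).mp h
      exact ⟨e z, by rw [hFe z, hz]⟩
    · rintro ⟨u, hu⟩
      obtain ⟨z, rfl⟩ := e.surjective u
      rw [hFe z] at hu
      exact (hE x).mpr ⟨z, e.injective hu⟩
  -- computation of `T`
  have hTapp : ∀ w : Fin r → A,
      T w = (∑ i, w i * g i) ⊗ₜ[R] 1 - ∑ i, w i ⊗ₜ[R] g i := by
    intro w
    rw [hTdef, Fintype.linearCombination_apply]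
    rw [TensorProduct.sum_tmul, ← Finset.sum_sub_distrib]
    refine Finset.sum_congr rfl fun i _ => ?_
    rw [hδ]
    rw [smul_sub, smul_tmul', smul_tmul', smul_eq_mul, smul_eq_mul, mul_one]
  -- P of the canonical lift equals -T
  have hι : ∀ w : Fin r → A,
      P (Fin.cons (-∑ i, w i * g i) w) = - T w := by
    intro w
    rw [hPapp, Fin.sum_univ_succ]
    simp only [Fin.cons_zero, Fin.cons_succ, hG]
    rw [hTapp w, neg_sub]
    rw [TensorProduct.neg_tmul]
    abel
  -- Part 2
  have part2 : LinearMap.ker T = LinearMap.range Nm.mulVecLin := by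
    ext w
    simp only [LinearMap.mem_ker, LinearMap.mem_range]
    constructor
    · intro hw
      have h0 : P (Fin.cons (-∑ i, w i * g i) w) = 0 := by rw [hι, hw, neg_zero]
      obtain ⟨u, hu⟩ := (hexact _).mp h0
      refine ⟨fun j => u (Fin.succ j) - u 0 * g j, ?_⟩
      funext i
      have hwi : w i = (ΛA.mulVecLin u) (Fin.succ i) := by
        rw [hu]; simp [Fin.cons_succ]
      rw [Matrix.mulVecLin_apply] at hwi
      simp only [Matrix.mulVecLin_apply, Matrix.mulVec, dotProduct] at hwi ⊢
      rw [hwi, Fin.sum_univ_succ]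
      have hc : ΛA (Fin.succ i) 0 = - ∑ j, g j * algebraMap R A (Λ (Fin.succ j) (Fin.succ i)) := by
        rw [hΛA]; simp only [Matrix.map_apply]
        rw [hsymm, hcol]
      rw [hc]
      have : ∀ j, Nm i j * (u (Fin.succ j) - u 0 * g j)
          = ΛA (Fin.succ i) (Fin.succ j) * u (Fin.succ j)
            - (g j * algebraMap R A (Λ (Fin.succ j) (Fin.succ i))) * u 0 := by
        intro j
        simp only [hNm, hΛA, Matrix.map_apply, Matrix.submatrix_apply]
        rw [hsymm (Fin.succ i) (Fin.succ j)]
        ring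
      rw [Finset.sum_congr rfl fun j _ => this j, Finset.sum_sub_distrib,
        ← Finset.sum_mul]
      ring
    · rintro ⟨v, rfl⟩
      have hlift : Fin.cons (-∑ i, (Nm.mulVecLin v) i * g i) (Nm.mulVecLin v)
          = ΛA.mulVecLin (Fin.cons 0 v) := by
        funext k
        refine Fin.cases ?_ (fun i => ?_) k
        · simp only [Fin.cons_zero, Matrix.mulVecLin_apply, Matrix.mulVec, dotProduct]
          rw [Fin.sum_univ_succ]
          simp only [Fin.cons_zero, Fin.cons_succ, mul_zero, zero_add]
          have h5 : ∀ i, (∑ j, Nm i j * v j) * g i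
              = ∑ j, (g i * algebraMap R A (Λ (Fin.succ i) (Fin.succ j))) * v j := by
            intro i
            rw [Finset.sum_mul]
            refine Finset.sum_congr rfl fun j _ => ?_
            simp only [hNm, Matrix.map_apply, Matrix.submatrix_apply]
            ring
          rw [Finset.sum_congr rfl fun i _ => h5 i, Finset.sum_comm, ← Finset.sum_neg_distrib]
          refine Finset.sum_congr rfl fun j _ => ?_
          rw [← Finset.sum_mul, ← neg_mul]
          congr 1
          have h6 : ΛA 0 (Fin.succ j) = algebraMap R A (Λ 0 (Fin.succ j)) := by
            rw [hΛA]; simp only [Matrix.map_apply]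
          rw [h6, hcol (Fin.succ j)]
        · simp only [Fin.cons_succ, Matrix.mulVecLin_apply, Matrix.mulVec, dotProduct]
          rw [Fin.sum_univ_succ]
          simp only [Fin.cons_zero, Fin.cons_succ, mul_zero, zero_add, hNm, hΛA,
            Matrix.map_apply, Matrix.submatrix_apply]
      have : T (Nm.mulVecLin v) = - P (ΛA.mulVecLin (Fin.cons 0 v)) := by
        rw [← hlift, hι, neg_neg]
      rw [this, hexact.apply_apply_eq_zero, neg_zero]
  -- Part 3
  have part3 : LinearMap.range T =
      (RingHom.ker (Algebra.TensorProduct.lmul' R (S := A)).toRingHom).restrictScalars A := by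
    ext x
    simp only [LinearMap.mem_range, Submodule.restrictScalars_mem, RingHom.mem_ker,
      AlgHom.toRingHom_eq_coe, RingHom.coe_coe]
    constructor
    · rintro ⟨w, rfl⟩
      rw [hTapp, map_sub, map_sum]
      simp only [Algebra.TensorProduct.lmul'_apply_tmul, mul_one]
      exact sub_eq_zero.mpr rfl
    · intro hx
      obtain ⟨v, rfl⟩ := hPsurj x
      have hμ : v 0 + ∑ i, v (Fin.succ i) * g i = 0 := by
        have := hx
        rw [hPapp, map_sum] at this
        simp only [Algebra.TensorProduct.lmul'_apply_tmul] at this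
        rw [Fin.sum_univ_succ] at this
        simpa only [hG, Fin.cons_zero, Fin.cons_succ, mul_one] using this
      refine ⟨-(fun i => v (Fin.succ i)), ?_⟩
      rw [map_neg, ← hι (fun i => v (Fin.succ i))]
      have hv0 : v 0 = -∑ i, v (Fin.succ i) * g i := eq_neg_of_add_eq_zero_left hμ
      have hvcons : Fin.cons (-∑ i, v (Fin.succ i) * g i) (fun i => v (Fin.succ i)) = v := by
        funext k
        refine Fin.cases ?_ (fun i => ?_) k
        · rw [Fin.cons_zero]; exact hv0.symm
        · rw [Fin.cons_succ]
      rw [hvcons]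
  exact ⟨hinj, part2, part3⟩
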